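/- Let n ≡ 1 (mod 8) be a positive square-free integer and let (α, β, γ) be a primitive integer solution to α² + nβ² = 2γ². If d is a divisor of n with d ≡ -1 (mod 8), then (-n/γ) = 1 as a Jacobi symbol, i.e., -n is a quadratic residue modulo every odd prime divisor of γ; moreover the Jacobi symbol (-1/γ) equals the Jacobi symbol (γ/n). -/

import Mathlib

private lemma jac_aux {α β n : ℤ} {m : ℕ} (h1 : Int.gcd α m = 1) (h2 : Int.gcd β m = 1)
    (hmod : (m : ℤ) ∣ (α ^ 2 - (-n * β ^ 2))) : jacobiSym (-n) m = 1 := by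
  have hme : jacobiSym (-n * β ^ 2) m = jacobiSym (α ^ 2) m :=
    jacobiSym.mod_left' (Int.modEq_iff_dvd.mpr hmod)
  rw [jacobiSym.mul_left, jacobiSym.sq_one' h2, jacobiSym.sq_one' h1, mul_one] at hme
  exact hme

theorem stmt13 (n α β γ d : ℤ) (hn : 0 < n) (hsf : Squarefree n) (hn8 : n % 8 = 1)
    (hsol : α ^ 2 + n * β ^ 2 = 2 * γ ^ 2) (hprim : Int.gcd α (Int.gcd β γ) = 1)
    (hγ : Odd γ) (hd : d ∣ n) (hd8 : d % 8 = 7) :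
    jacobiSym (-n) γ.natAbs = 1 ∧
      (∀ p : ℕ, p.Prime → Odd p → (p : ℤ) ∣ γ → IsSquare ((-n : ℤ) : ZMod p)) ∧
      jacobiSym (-1) γ.natAbs = jacobiSym γ n.natAbs := by
  -- basic coprimality facts
  have hβf : ∀ p : ℤ, Prime p → p ∣ γ → p ∣ β → False := by
    intro p hp hpγ hpβ
    have hpα : p ∣ α := by
      apply hp.dvd_of_dvd_pow (n := 2)
      have h : α ^ 2 = 2 * γ ^ 2 - n * β ^ 2 := by linarith
      rw [h]
      exact dvd_sub (Dvd.dvd.mul_left (hpγ.pow two_ne_zero) 2)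
        (Dvd.dvd.mul_left (hpβ.pow two_ne_zero) n)
    have : p ∣ (1 : ℤ) := by
      rw [show (1 : ℤ) = ((1 : ℕ) : ℤ) by norm_num, ← hprim]
      exact Int.dvd_coe_gcd hpα (Int.dvd_coe_gcd hpβ hpγ)
    exact hp.not_unit (isUnit_of_dvd_one this)
  have hαf : ∀ p : ℤ, Prime p → p ∣ γ → p ∣ α → False := by
    intro p hp hpγ hpα
    have hnb : p ∣ n * β ^ 2 := by
      have h : n * β ^ 2 = 2 * γ ^ 2 - α ^ 2 := by linarith
      rw [h]
      exact dvd_sub (Dvd.dvd.mul_left (hpγ.pow two_ne_zero) 2) (hpα.pow two_ne_zero)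
    rcases hp.dvd_mul.mp hnb with hpn | hpb
    · -- p ∣ n : then p² ∣ nβ², so p ∣ β
      have hp2 : p ^ 2 ∣ n * β ^ 2 := by
        have h : n * β ^ 2 = 2 * γ ^ 2 - α ^ 2 := by linarith
        rw [h]
        exact dvd_sub (Dvd.dvd.mul_left (pow_dvd_pow_of_dvd hpγ 2) 2)
          (pow_dvd_pow_of_dvd hpα 2)
      obtain ⟨k, hk⟩ := hpn
      have hpk : ¬ p ∣ k := by
        intro hpk
        obtain ⟨l, hl⟩ := hpk
        exact hp.not_unit (hsf p ⟨l, by rw [hk, hl]; ring⟩)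
      have hkb : p ∣ k * β ^ 2 := by
        obtain ⟨c, hc⟩ := hp2
        refine ⟨c, mul_left_cancel₀ hp.ne_zero ?_⟩
        rw [hk] at hc
        linarith [hc]
      rcases hp.dvd_mul.mp hkb with h | h
      · exact hpk h
      · exact hβf p hp hpγ (hp.dvd_of_dvd_pow h)
    · exact hβf p hp hpγ (hp.dvd_of_dvd_pow hpb)
  have hnf : ∀ p : ℤ, Prime p → p ∣ γ → p ∣ n → False := by
    intro p hp hpγ hpn
    apply hαf p hp hpγ
    apply hp.dvd_of_dvd_pow (n := 2)
    have h : α ^ 2 = 2 * γ ^ 2 - n * β ^ 2 := by linarith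
    rw [h]
    exact dvd_sub (Dvd.dvd.mul_left (hpγ.pow two_ne_zero) 2) (Dvd.dvd.mul_right hpn _)
  -- gcd facts with γ
  have gcd_one : ∀ x : ℤ, (∀ p : ℤ, Prime p → p ∣ γ → p ∣ x → False) → Int.gcd x γ = 1 := by
    intro x hx
    by_contra h
    obtain ⟨q, hq, hqd⟩ := Nat.exists_prime_and_dvd h
    have hqz : Prime (q : ℤ) := Nat.prime_iff_prime_int.mp hq
    exact hx _ hqz (dvd_trans (Int.ofNat_dvd.mpr hqd) (Int.gcd_dvd_right _ _))
      (dvd_trans (Int.ofNat_dvd.mpr hqd) (Int.gcd_dvd_left _ _))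
  have hαγ : Int.gcd α γ = 1 := gcd_one α hαf
  have hβγ : Int.gcd β γ = 1 := gcd_one β hβf
  have hnγ : Int.gcd n γ = 1 := gcd_one n hnf
  have hkey : α ^ 2 - (-n * β ^ 2) = 2 * γ ^ 2 := by ring_nf; linarith
  -- part 1
  have part1 : jacobiSym (-n) γ.natAbs = 1 := by
    apply jac_aux (β := β)
    · simpa only [Int.gcd, Int.natAbs_natCast] using hαγ
    · simpa only [Int.gcd, Int.natAbs_natCast] using hβγ
    · rw [hkey]
      exact Dvd.dvd.mul_left
        (((Int.natAbs_dvd).mpr dvd_rfl).trans (dvd_pow_self γ two_ne_zero)) 2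
  refine ⟨part1, ?_, ?_⟩
  · -- part 2
    intro p hp hpodd hpγ
    haveI : Fact p.Prime := ⟨hp⟩
    have hpz : Prime (p : ℤ) := Nat.prime_iff_prime_int.mp hp
    apply ZMod.isSquare_of_jacobiSym_eq_one
    apply jac_aux (β := β)
    · exact Int.isCoprime_iff_gcd_eq_one.mp
        ((hpz.coprime_iff_not_dvd.mpr (fun h => hαf _ hpz hpγ h)).symm)
    · exact Int.isCoprime_iff_gcd_eq_one.mp
        ((hpz.coprime_iff_not_dvd.mpr (fun h => hβf _ hpz hpγ h)).symm)
    · rw [hkey]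
      exact Dvd.dvd.mul_left (hpγ.trans (dvd_pow_self γ two_ne_zero)) 2
  · -- part 3
    have hg1 : Int.gcd (-1 : ℤ) γ.natAbs = 1 := by simp [Int.gcd]
    have hgn : Int.gcd n (γ.natAbs : ℤ) = 1 := by simpa only [Int.gcd, Int.natAbs_natCast] using hnγ
    have hmul : jacobiSym (-1) γ.natAbs * jacobiSym n γ.natAbs = 1 := by
      rw [← jacobiSym.mul_left]
      simpa using part1
    have heq : jacobiSym (-1) γ.natAbs = jacobiSym n γ.natAbs := by
      rcases jacobiSym.eq_one_or_neg_one hg1 with h1 | h1 <;>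
        rcases jacobiSym.eq_one_or_neg_one hgn with h2 | h2 <;>
          (rw [h1, h2] at hmul ⊢) <;> omega
    rw [heq]
    have hnn : ((n.natAbs : ℤ)) = n := Int.natAbs_of_nonneg hn.le
    have ha : n.natAbs % 4 = 1 := by omega
    have hb : Odd γ.natAbs := Int.natAbs_odd.mpr hγ
    have hr : jacobiSym (n.natAbs : ℤ) γ.natAbs = jacobiSym (γ.natAbs : ℤ) n.natAbs :=
      jacobiSym.quadratic_reciprocity_one_mod_four ha hb
    have step1 : jacobiSym n γ.natAbs = jacobiSym ((γ.natAbs : ℤ)) n.natAbs := by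
      rw [← hnn]; exact hr
    rw [step1]
    rcases le_or_gt 0 γ with hpos | hneg
    · rw [Int.natAbs_of_nonneg hpos]
    · have hγeq : γ = -(γ.natAbs : ℤ) := by omega
      have hno : Odd n.natAbs := Int.natAbs_odd.mpr (Int.odd_iff.mpr (by omega))
      conv_rhs => rw [hγeq]
      rw [show (-(γ.natAbs : ℤ)) = -1 * (γ.natAbs : ℤ) by ring, jacobiSym.mul_left,
        jacobiSym.at_neg_one hno, ZMod.χ₄_nat_one_mod_four ha, one_mul]
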